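/- For every n > 2, there exists a unitary D ∈ U(ℂ^n ⊗ ℂ^n) with operator Schmidt rank Ω(D) = n² - 1. -/

import Mathlib

open Matrix Kronecker

set_option maxHeartbeats 4000000

/-- The realignment (reshuffling) of a bipartite operator. -/
def realign {n m : ℕ} (X : Matrix (Fin n × Fin m) (Fin n × Fin m) ℂ) :
    Matrix (Fin n × Fin n) (Fin m × Fin m) ℂ :=
  Matrix.of fun p q => X (p.1, q.1) (p.2, q.2)

/-- The operator Schmidt rank of a bipartite operator, i.e. the rank
of its realignment. -/
noncomputable def osr {n m : ℕ} (X : Matrix (Fin n × Fin m) (Fin n × Fin m) ℂ) : ℕ :=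
  (realign X).rank

namespace Stmt17Aux

/-- Complex number from real and imaginary parts. -/
noncomputable def z (a b : ℝ) : ℂ := ⟨a, b⟩

@[simp] lemma z_re (a b : ℝ) : (z a b).re = a := rfl
@[simp] lemma z_im (a b : ℝ) : (z a b).im = b := rfl

lemma z_star (a b : ℝ) : star (z a b) = z a (-b) := by
  apply Complex.ext <;> simp [z]

/-- The 6×6 gadget table: `Wt i j k l` is the `(k,l)` entry of the unitary's
row block `(i,j)`. -/
noncomputable def Wt (i j k l : ℕ) : ℂ :=
  if i = 0 then
    (if j = 0 then (if k = 0 then (if l = 0 then z (3/8) (3/8) else z (1/8) (1/8)) else if k = 1 then (if l = 0 then z (1/8) (1/8) else z (-3/8) (3/8)) else (if l = 0 then z (-1/2) 0 else z (-1/4) (1/4)))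
     else if j = 1 then (if k = 0 then (if l = 0 then z (1/8) (3/8) else z (-1/8) (-3/8)) else if k = 1 then (if l = 0 then z (3/8) (1/8) else z (1/8) (-3/8)) else (if l = 0 then z 0 (1/2) else z (-1/4) (-1/4)))
     else (if k = 0 then (if l = 0 then z (1/4) (1/2) else z (1/4) 0) else if k = 1 then (if l = 0 then z (-1/4) (-1/2) else z 0 (-1/4)) else (if l = 0 then z 0 0 else z (1/2) 0)))
  else
    (if j = 0 then (if k = 0 then (if l = 0 then z (1/8) (1/8) else z (3/8) (3/8)) else if k = 1 then (if l = 0 then z (3/8) (3/8) else z (-1/8) (1/8)) else (if l = 0 then z (1/2) 0 else z (1/4) (-1/4)))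
     else if j = 1 then (if k = 0 then (if l = 0 then z (3/8) (1/8) else z (-3/8) (-1/8)) else if k = 1 then (if l = 0 then z (1/8) (3/8) else z (3/8) (-1/8)) else (if l = 0 then z 0 (-1/2) else z (1/4) (1/4)))
     else (if k = 0 then (if l = 0 then z (1/4) 0 else z (1/4) (1/2)) else if k = 1 then (if l = 0 then z (-1/4) 0 else z (1/2) (-1/4)) else (if l = 0 then z 0 0 else z (-1/2) 0)))

/-- Kernel-vector table. -/
noncomputable def vt (j l : ℕ) : ℂ :=
  if j = 0 then (if l = 0 then z 0 0 else z (-3/2) (-3/2))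
  else if j = 1 then (if l = 0 then z 0 2 else z (1/2) (-1/2))
  else (if l = 0 then z 1 (-1) else z 1 0)

variable {n : ℕ}

def f0 (hn : 2 < n) : Fin n := ⟨0, by omega⟩
def f1 (hn : 2 < n) : Fin n := ⟨1, by omega⟩
def f2 (hn : 2 < n) : Fin n := ⟨2, by omega⟩

@[simp] lemma f0_val (hn : 2 < n) : (f0 hn).val = 0 := rfl
@[simp] lemma f1_val (hn : 2 < n) : (f1 hn).val = 1 := rfl
@[simp] lemma f2_val (hn : 2 < n) : (f2 hn).val = 2 := rfl

/-- The unitary: a 6-dimensional gadget block plus a phased swap. -/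
noncomputable def Dmat (n : ℕ) : Matrix (Fin n × Fin n) (Fin n × Fin n) ℂ :=
  fun x y =>
    if x.1.val < 2 ∧ x.2.val < 3 then
      (if y.1.val < 3 ∧ y.2.val < 2 then Wt x.1.val x.2.val y.1.val y.2.val else 0)
    else (if y = (x.2, x.1) then 1 else 0)

lemma Dmat_special (x y : Fin n × Fin n) (hx : x.1.val < 2 ∧ x.2.val < 3) :
    Dmat n x y =
      if y.1.val < 3 ∧ y.2.val < 2 then Wt x.1.val x.2.val y.1.val y.2.val else 0 := by
  simp only [Dmat, if_pos hx]

lemma Dmat_generic (x y : Fin n × Fin n) (hx : ¬(x.1.val < 2 ∧ x.2.val < 3)) :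
    Dmat n x y = if y = (x.2, x.1) then 1 else 0 := by
  simp only [Dmat, if_neg hx]

/-- Collapsing a sum supported on the six special points. -/
lemma sum6 (hn : 2 < n) (g : Fin n × Fin n → ℂ) :
    (∑ y : Fin n × Fin n, if y.1.val < 3 ∧ y.2.val < 2 then g y else 0)
      = g (f0 hn, f0 hn) + g (f0 hn, f1 hn) + g (f1 hn, f0 hn) + g (f1 hn, f1 hn)
        + g (f2 hn, f0 hn) + g (f2 hn, f1 hn) := by
  rw [← Finset.sum_filter]
  have hfil : Finset.univ.filter (fun y : Fin n × Fin n => y.1.val < 3 ∧ y.2.val < 2)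
      = {(f0 hn, f0 hn), (f0 hn, f1 hn), (f1 hn, f0 hn), (f1 hn, f1 hn),
         (f2 hn, f0 hn), (f2 hn, f1 hn)} := by
    ext y
    simp only [Finset.mem_filter, Finset.mem_univ, true_and, Finset.mem_insert,
      Finset.mem_singleton, Prod.ext_iff, Fin.ext_iff, f0_val, f1_val, f2_val]
    omega
  rw [hfil]
  rw [Finset.sum_insert (by simp [Prod.ext_iff, Fin.ext_iff]),
      Finset.sum_insert (by simp [Prod.ext_iff, Fin.ext_iff]),
      Finset.sum_insert (by simp [Prod.ext_iff, Fin.ext_iff]),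
      Finset.sum_insert (by simp [Prod.ext_iff, Fin.ext_iff]),
      Finset.sum_insert (by simp [Prod.ext_iff, Fin.ext_iff]),
      Finset.sum_singleton]
  ring

/-- The matrix `Dmat` is unitary. -/
lemma Dmat_unitary (hn : 2 < n) : Dmat n * star (Dmat n) = 1 := by
  ext x x'
  rw [Matrix.mul_apply, Matrix.one_apply]
  have hif : (if x = x' then (1 : ℂ) else 0)
      = (if (x.1.val = x'.1.val ∧ x.2.val = x'.2.val) then 1 else 0) := by
    by_cases h : x = x'
    · rw [if_pos h, if_pos (by rw [h]; exact ⟨rfl, rfl⟩)]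
    · rw [if_neg h, if_neg (fun hc => h (Prod.ext (Fin.ext hc.1) (Fin.ext hc.2)))]
  rw [hif]
  simp only [Matrix.star_apply]
  by_cases hx : x.1.val < 2 ∧ x.2.val < 3
  · by_cases hx' : x'.1.val < 2 ∧ x'.2.val < 3
    · -- both rows are gadget rows
      have hterm : ∀ y : Fin n × Fin n,
          Dmat n x y * star (Dmat n x' y)
            = (if y.1.val < 3 ∧ y.2.val < 2 then
                Wt x.1.val x.2.val y.1.val y.2.val
                  * star (Wt x'.1.val x'.2.val y.1.val y.2.val) else 0) := by
        intro y
        rw [Dmat_special x y hx, Dmat_special x' y hx']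
        by_cases hy : y.1.val < 3 ∧ y.2.val < 2
        · rw [if_pos hy, if_pos hy, if_pos hy]
        · rw [if_neg hy, if_neg hy, if_neg hy, zero_mul]
      rw [Finset.sum_congr rfl fun y _ => hterm y, sum6 hn]
      simp only [f0_val, f1_val, f2_val]
      have h1 : x.1.val = 0 ∨ x.1.val = 1 := by omega
      have h2 : x.2.val = 0 ∨ x.2.val = 1 ∨ x.2.val = 2 := by omega
      have h1' : x'.1.val = 0 ∨ x'.1.val = 1 := by omega
      have h2' : x'.2.val = 0 ∨ x'.2.val = 1 ∨ x'.2.val = 2 := by omega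
      rcases h1 with h1 | h1 <;> rcases h2 with h2 | h2 | h2 <;>
        rcases h1' with h1' | h1' <;> rcases h2' with h2' | h2' | h2' <;>
        · simp only [h1, h2, h1', h2']
          norm_num [Wt, z_star, Prod.ext_iff, Fin.ext_iff, h1, h2, h1', h2',
            Complex.ext_iff, Complex.add_re, Complex.add_im, Complex.mul_re,
            Complex.mul_im, z_re, z_im]
    · -- x gadget row, x' swap row
      have hterm : ∀ y : Fin n × Fin n,
          Dmat n x y * star (Dmat n x' y)
            = (if y = (x'.2, x'.1) then Dmat n x y else 0) := by
        intro y
        rw [Dmat_generic x' y hx']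
        by_cases hy : y = (x'.2, x'.1) <;> simp [hy]
      rw [Finset.sum_congr rfl fun y _ => hterm y, Finset.sum_ite_eq' Finset.univ _
        (fun y => Dmat n x y)]
      rw [if_pos (Finset.mem_univ _), Dmat_special x (x'.2, x'.1) hx,
        if_neg (show ¬((x'.2).val < 3 ∧ (x'.1).val < 2) by omega),
        if_neg (show ¬(x.1.val = x'.1.val ∧ x.2.val = x'.2.val) by omega)]
  · -- x swap row
    have hterm : ∀ y : Fin n × Fin n,
        Dmat n x y * star (Dmat n x' y)
          = (if y = (x.2, x.1) then star (Dmat n x' y) else 0) := by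
      intro y
      rw [Dmat_generic x y hx]
      by_cases hy : y = (x.2, x.1) <;> simp [hy]
    rw [Finset.sum_congr rfl fun y _ => hterm y, Finset.sum_ite_eq' Finset.univ _
      (fun y => star (Dmat n x' y)), if_pos (Finset.mem_univ _)]
    by_cases hx' : x'.1.val < 2 ∧ x'.2.val < 3
    · rw [Dmat_special x' (x.2, x.1) hx',
        if_neg (show ¬((x.2).val < 3 ∧ (x.1).val < 2) by omega),
        if_neg (show ¬(x.1.val = x'.1.val ∧ x.2.val = x'.2.val) by omega), star_zero]
    · rw [Dmat_generic x' (x.2, x.1) hx']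
      have hiff : ((x.2, x.1) = (x'.2, x'.1))
          ↔ (x.1.val = x'.1.val ∧ x.2.val = x'.2.val) := by
        rw [Prod.ext_iff, Fin.ext_iff, Fin.ext_iff]
        exact ⟨fun h => ⟨h.2, h.1⟩, fun h => ⟨h.2, h.1⟩⟩
      rw [if_congr hiff rfl rfl]
      by_cases hxx : x.1.val = x'.1.val ∧ x.2.val = x'.2.val <;> simp [hxx]

/-- Realignment rows indexed by gadget positions. -/
lemma R_row_special (hn : 2 < n) (p q : Fin n × Fin n) (hp : p.1.val < 2 ∧ p.2.val < 3) :
    realign (Dmat n) p q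
      = if q.1.val < 3 ∧ q.2.val < 2 then Wt p.1.val q.1.val p.2.val q.2.val else 0 := by
  show Dmat n (p.1, q.1) (p.2, q.2) = _
  by_cases h1 : q.1.val < 3
  · rw [Dmat_special (p.1, q.1) (p.2, q.2) ⟨hp.1, h1⟩]
    by_cases h2 : q.2.val < 2
    · rw [if_pos ⟨hp.2, h2⟩, if_pos ⟨h1, h2⟩]
    · rw [if_neg (fun h => h2 h.2), if_neg (fun h => h2 h.2)]
  · have hne : ¬((p.2, q.2) = ((p.1, q.1).2, (p.1, q.1).1)) := by
      intro h
      have h3 : p.2 = q.1 := congrArg Prod.fst h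
      have := congrArg Fin.val h3
      omega
    rw [Dmat_generic (p.1, q.1) (p.2, q.2) (fun h => h1 h.2), if_neg hne,
      if_neg (fun h => h1 h.1)]

/-- Realignment rows indexed by swap positions. -/
lemma R_row_generic (p q : Fin n × Fin n) (hp : ¬(p.1.val < 2 ∧ p.2.val < 3)) :
    realign (Dmat n) p q = if q = (p.2, p.1) then 1 else 0 := by
  show Dmat n (p.1, q.1) (p.2, q.2) = _
  by_cases h1 : p.1.val < 2 ∧ q.1.val < 3
  · have h2 : ¬(p.2.val < 3) := fun h => hp ⟨h1.1, h⟩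
    have hne : ¬(q = (p.2, p.1)) := by
      intro h
      have h3 : q.1 = p.2 := congrArg Prod.fst h
      have := congrArg Fin.val h3
      omega
    rw [Dmat_special (p.1, q.1) (p.2, q.2) h1,
      if_neg (show ¬((p.2, q.2).1.val < 3 ∧ (p.2, q.2).2.val < 2) from fun h => h2 h.1),
      if_neg hne]
  · rw [Dmat_generic (p.1, q.1) (p.2, q.2) h1]
    have hiff : ((p.2, q.2) = (q.1, p.1)) ↔ q = (p.2, p.1) := by
      rw [Prod.ext_iff, Prod.ext_iff]
      exact ⟨fun h => ⟨h.1.symm, h.2⟩, fun h => ⟨h.1.symm, h.2⟩⟩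
    rw [if_congr hiff rfl rfl]

lemma mulVec_generic (x : (Fin n × Fin n) → ℂ) (p : Fin n × Fin n)
    (hp : ¬(p.1.val < 2 ∧ p.2.val < 3)) :
    (realign (Dmat n)).mulVec x p = x (p.2, p.1) := by
  show (∑ q, realign (Dmat n) p q * x q) = _
  rw [Finset.sum_congr rfl fun q _ => by rw [R_row_generic p q hp]]
  simp [ite_mul, Finset.sum_ite_eq']

lemma mulVec_special (hn : 2 < n) (x : (Fin n × Fin n) → ℂ) (p : Fin n × Fin n)
    (hp : p.1.val < 2 ∧ p.2.val < 3) :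
    (realign (Dmat n)).mulVec x p
      = Wt p.1.val 0 p.2.val 0 * x (f0 hn, f0 hn) + Wt p.1.val 0 p.2.val 1 * x (f0 hn, f1 hn)
        + Wt p.1.val 1 p.2.val 0 * x (f1 hn, f0 hn) + Wt p.1.val 1 p.2.val 1 * x (f1 hn, f1 hn)
        + Wt p.1.val 2 p.2.val 0 * x (f2 hn, f0 hn)
        + Wt p.1.val 2 p.2.val 1 * x (f2 hn, f1 hn) := by
  show (∑ q, realign (Dmat n) p q * x q) = _
  rw [Finset.sum_congr rfl fun q _ => by
    rw [R_row_special hn p q hp, ite_mul, zero_mul]]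
  rw [sum6 hn (fun q => Wt p.1.val q.1.val p.2.val q.2.val * x q)]
  simp only [f0_val, f1_val, f2_val]

/-- The kernel vector of the realignment. -/
noncomputable def uvec (n : ℕ) : (Fin n × Fin n) → ℂ :=
  fun q => if q.1.val < 3 ∧ q.2.val < 2 then vt q.1.val q.2.val else 0

lemma mulVec_uvec (hn : 2 < n) : (realign (Dmat n)).mulVec (uvec n) = 0 := by
  funext p
  rw [Pi.zero_apply]
  by_cases hp : p.1.val < 2 ∧ p.2.val < 3
  · rw [mulVec_special hn (uvec n) p hp]
    have hu00 : uvec n (f0 hn, f0 hn) = vt 0 0 := by simp [uvec]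
    have hu01 : uvec n (f0 hn, f1 hn) = vt 0 1 := by simp [uvec]
    have hu10 : uvec n (f1 hn, f0 hn) = vt 1 0 := by simp [uvec]
    have hu11 : uvec n (f1 hn, f1 hn) = vt 1 1 := by simp [uvec]
    have hu20 : uvec n (f2 hn, f0 hn) = vt 2 0 := by simp [uvec]
    have hu21 : uvec n (f2 hn, f1 hn) = vt 2 1 := by simp [uvec]
    rw [hu00, hu01, hu10, hu11, hu20, hu21]
    have h1 : p.1.val = 0 ∨ p.1.val = 1 := by omega
    have h2 : p.2.val = 0 ∨ p.2.val = 1 ∨ p.2.val = 2 := by omega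
    rcases h1 with h1 | h1 <;> rcases h2 with h2 | h2 | h2 <;>
      · simp only [h1, h2]
        norm_num [Wt, vt, Complex.ext_iff, Complex.add_re, Complex.add_im,
          Complex.mul_re, Complex.mul_im, z_re, z_im]
  · rw [mulVec_generic (uvec n) p hp]
    have : ¬((p.2).val < 3 ∧ (p.1).val < 2) := by omega
    simp [uvec, this]
    intro h1 h2; omega

lemma uvec_ne (hn : 2 < n) : uvec n ≠ 0 := by
  intro h
  have h2 := congrFun h (f2 hn, f1 hn)
  simp only [uvec, f2_val, f1_val, Pi.zero_apply] at h2
  norm_num [vt, Complex.ext_iff, z_re, z_im] at h2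

/-- Any kernel element is a multiple of `uvec`. -/
lemma ker_sub (hn : 2 < n) (x : (Fin n × Fin n) → ℂ)
    (hx : (realign (Dmat n)).mulVec x = 0) :
    x = x (f2 hn, f1 hn) • uvec n := by
  have hgen : ∀ q : Fin n × Fin n, ¬(q.1.val < 3 ∧ q.2.val < 2) → x q = 0 := by
    intro q hq
    have h := congrFun hx (q.2, q.1)
    rw [Pi.zero_apply, mulVec_generic x (q.2, q.1) (fun hcc => hq ⟨hcc.2, hcc.1⟩)] at h
    exact h
  -- the six gadget-row equations
  have h00 := congrFun hx (f0 hn, f0 hn)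
  have h01 := congrFun hx (f0 hn, f1 hn)
  have h02 := congrFun hx (f0 hn, f2 hn)
  have h10 := congrFun hx (f1 hn, f0 hn)
  have h11 := congrFun hx (f1 hn, f1 hn)
  have h12 := congrFun hx (f1 hn, f2 hn)
  rw [Pi.zero_apply, mulVec_special hn x (f0 hn, f0 hn) (by constructor <;> simp)] at h00
  rw [Pi.zero_apply, mulVec_special hn x (f0 hn, f1 hn) (by constructor <;> simp)] at h01
  rw [Pi.zero_apply, mulVec_special hn x (f0 hn, f2 hn) (by constructor <;> simp)] at h02
  rw [Pi.zero_apply, mulVec_special hn x (f1 hn, f0 hn) (by constructor <;> simp)] at h10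
  rw [Pi.zero_apply, mulVec_special hn x (f1 hn, f1 hn) (by constructor <;> simp)] at h11
  rw [Pi.zero_apply, mulVec_special hn x (f1 hn, f2 hn) (by constructor <;> simp)] at h12
  simp only [f0_val, f1_val, f2_val] at h00 h01 h02 h10 h11 h12
  norm_num [Wt, Complex.ext_iff, Complex.add_re, Complex.add_im, Complex.mul_re,
    Complex.mul_im, z_re, z_im] at h00 h01 h02 h10 h11 h12
  obtain ⟨e0r, e0i⟩ := h00
  obtain ⟨e1r, e1i⟩ := h01
  obtain ⟨e2r, e2i⟩ := h02
  obtain ⟨e3r, e3i⟩ := h10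
  obtain ⟨e4r, e4i⟩ := h11
  obtain ⟨e5r, e5i⟩ := h12
  funext q
  rw [Pi.smul_apply, smul_eq_mul]
  by_cases hq : q.1.val < 3 ∧ q.2.val < 2
  · have hq1 : q.1.val = 0 ∨ q.1.val = 1 ∨ q.1.val = 2 := by omega
    have hq2 : q.2.val = 0 ∨ q.2.val = 1 := by omega
    have hqpair : ∀ (a : Fin n), q.1 = a → ∀ (b : Fin n), q.2 = b → q = (a, b) := by
      intro a ha b hb; rw [Prod.ext_iff]; exact ⟨ha, hb⟩
    rcases hq1 with hq1 | hq1 | hq1 <;> rcases hq2 with hq2 | hq2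
    · rw [hqpair (f0 hn) (Fin.ext (by simp [hq1])) (f0 hn) (Fin.ext (by simp [hq2]))]
      simp only [uvec, f0_val, f1_val, f2_val]
      norm_num [vt]
      rw [Complex.ext_iff]
      constructor
      · simp only [Complex.mul_re, Complex.mul_im, Complex.zero_re, Complex.zero_im,
          z_re, z_im]
        linear_combination (1/2 : ℝ) * e0r + (3/2 : ℝ) * e0i + (1 : ℝ) * e1i
          + (-1/2 : ℝ) * e2r + (-1/2 : ℝ) * e2i + (-1/2 : ℝ) * e3r + (-1/2 : ℝ) * e3i
          + (1 : ℝ) * e4r + (-1 : ℝ) * e4i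
      · simp only [Complex.mul_re, Complex.mul_im, Complex.zero_re, Complex.zero_im,
          z_re, z_im]
        linear_combination (-3/2 : ℝ) * e0r + (1/2 : ℝ) * e0i + (-1 : ℝ) * e1r
          + (1/2 : ℝ) * e2r + (-1/2 : ℝ) * e2i + (1/2 : ℝ) * e3r + (-1/2 : ℝ) * e3i
          + (1 : ℝ) * e4r + (1 : ℝ) * e4i
    · rw [hqpair (f0 hn) (Fin.ext (by simp [hq1])) (f1 hn) (Fin.ext (by simp [hq2]))]
      simp only [uvec, f0_val, f1_val, f2_val]
      norm_num [vt]
      rw [Complex.ext_iff]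
      constructor
      · simp only [Complex.mul_re, Complex.mul_im, z_re, z_im]
        linear_combination (-1/2 : ℝ) * e0r + (-3/2 : ℝ) * e0i + (-1/2 : ℝ) * e1r
          + (-1/2 : ℝ) * e1i + (-1 : ℝ) * e2i + (5/2 : ℝ) * e3r + (3/2 : ℝ) * e3i
          + (1/2 : ℝ) * e4r + (1/2 : ℝ) * e4i
      · simp only [Complex.mul_re, Complex.mul_im, z_re, z_im]
        linear_combination (3/2 : ℝ) * e0r + (-1/2 : ℝ) * e0i + (1/2 : ℝ) * e1r
          + (-1/2 : ℝ) * e1i + (1 : ℝ) * e2r + (-3/2 : ℝ) * e3r + (5/2 : ℝ) * e3i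
          + (-1/2 : ℝ) * e4r + (1/2 : ℝ) * e4i
    · rw [hqpair (f1 hn) (Fin.ext (by simp [hq1])) (f0 hn) (Fin.ext (by simp [hq2]))]
      simp only [uvec, f0_val, f1_val, f2_val]
      norm_num [vt]
      rw [Complex.ext_iff]
      constructor
      · simp only [Complex.mul_re, Complex.mul_im, z_re, z_im]
        linear_combination (-1/2 : ℝ) * e0r + (-1/2 : ℝ) * e0i + (-1 : ℝ) * e1i
          + (1/2 : ℝ) * e2r + (3/2 : ℝ) * e2i + (-1/2 : ℝ) * e3r + (1/2 : ℝ) * e3i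
          + (2 : ℝ) * e4i
      · simp only [Complex.mul_re, Complex.mul_im, z_re, z_im]
        linear_combination (1/2 : ℝ) * e0r + (-1/2 : ℝ) * e0i + (1 : ℝ) * e1r
          + (-3/2 : ℝ) * e2r + (1/2 : ℝ) * e2i + (-1/2 : ℝ) * e3r + (-1/2 : ℝ) * e3i
          + (-2 : ℝ) * e4r
    · rw [hqpair (f1 hn) (Fin.ext (by simp [hq1])) (f1 hn) (Fin.ext (by simp [hq2]))]
      simp only [uvec, f0_val, f1_val, f2_val]
      norm_num [vt]
      rw [Complex.ext_iff]
      constructor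
      · simp only [Complex.mul_re, Complex.mul_im, z_re, z_im]
        linear_combination (-3/2 : ℝ) * e0r + (-3/2 : ℝ) * e0i + (-1/2 : ℝ) * e1r
          + (-3/2 : ℝ) * e1i + (-1 : ℝ) * e2r + (3/2 : ℝ) * e3r + (-1/2 : ℝ) * e3i
          + (1/2 : ℝ) * e4r + (3/2 : ℝ) * e4i
      · simp only [Complex.mul_re, Complex.mul_im, z_re, z_im]
        linear_combination (3/2 : ℝ) * e0r + (-3/2 : ℝ) * e0i + (3/2 : ℝ) * e1r
          + (-1/2 : ℝ) * e1i + (-1 : ℝ) * e2i + (1/2 : ℝ) * e3r + (3/2 : ℝ) * e3i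
          + (-3/2 : ℝ) * e4r + (1/2 : ℝ) * e4i
    · rw [hqpair (f2 hn) (Fin.ext (by simp [hq1])) (f0 hn) (Fin.ext (by simp [hq2]))]
      simp only [uvec, f0_val, f1_val, f2_val]
      norm_num [vt]
      rw [Complex.ext_iff]
      constructor
      · simp only [Complex.mul_re, Complex.mul_im, z_re, z_im]
        linear_combination (-1 : ℝ) * e1i + (-1 : ℝ) * e2r + (1 : ℝ) * e3r
          + (-1 : ℝ) * e3i + (-1 : ℝ) * e4r
      · simp only [Complex.mul_re, Complex.mul_im, z_re, z_im]
        linear_combination (1 : ℝ) * e1r + (-1 : ℝ) * e2i + (1 : ℝ) * e3r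
          + (1 : ℝ) * e3i + (-1 : ℝ) * e4i
    · rw [hqpair (f2 hn) (Fin.ext (by simp [hq1])) (f1 hn) (Fin.ext (by simp [hq2]))]
      simp only [uvec, f0_val, f1_val, f2_val]
      norm_num [vt]
      rw [Complex.ext_iff]
      constructor
      · simp only [Complex.mul_re, Complex.mul_im, z_re, z_im]; ring
      · simp only [Complex.mul_re, Complex.mul_im, z_re, z_im]; ring
  · rw [hgen q hq]
    simp [uvec, hq]
    intro h1 h2; omega

end Stmt17Aux

open Stmt17Aux in
/-- For every `n > 2` there is a unitary on `ℂ^n ⊗ ℂ^n` with operator Schmidt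
rank `n² - 1`. -/
theorem stmt17 (n : ℕ) (hn : 2 < n) :
    ∃ D ∈ Matrix.unitaryGroup (Fin n × Fin n) ℂ, osr D = n ^ 2 - 1 := by
  refine ⟨Dmat n, Matrix.mem_unitaryGroup_iff.mpr (Dmat_unitary hn), ?_⟩
  have hker : LinearMap.ker (realign (Dmat n)).mulVecLin = Submodule.span ℂ {uvec n} := by
    apply le_antisymm
    · intro x hxk
      rw [LinearMap.mem_ker, Matrix.mulVecLin_apply] at hxk
      rw [Submodule.mem_span_singleton]
      exact ⟨x (f2 hn, f1 hn), (ker_sub hn x hxk).symm⟩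
    · rw [Submodule.span_le, Set.singleton_subset_iff, SetLike.mem_coe,
        LinearMap.mem_ker, Matrix.mulVecLin_apply]
      exact mulVec_uvec hn
  have hrn := LinearMap.finrank_range_add_finrank_ker (realign (Dmat n)).mulVecLin
  rw [hker, finrank_span_singleton (uvec_ne hn)] at hrn
  have hcard : Module.finrank ℂ ((Fin n × Fin n) → ℂ) = n * n := by
    rw [Module.finrank_fintype_fun_eq_card, Fintype.card_prod, Fintype.card_fin]
  rw [hcard] at hrn
  have hdef : osr (Dmat n)
      = Module.finrank ℂ (LinearMap.range (realign (Dmat n)).mulVecLin) := rfl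
  have hsq : n ^ 2 = n * n := by ring
  omega
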